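/- If s is a minimal bad interval for F and t is a good interval for F, then t is good for the reduced family F↓s. -/

import Mathlib

open scoped Classical

/-- A finite family of sets is irredundant if its members can be arranged in a
sequence such that each set contains a point not in any of the preceding sets. -/
def Irredundant (F : Finset (Set ℤ)) : Prop :=
  ∃ l : List (Set ℤ), l.Nodup ∧ l.toFinset = F ∧
    ∀ i : Fin l.length, ∃ x ∈ l.get i, ∀ j : Fin l.length, j < i → x ∉ l.get j

/-- An interval is a nonempty half-open integer interval `[a,b)`. -/
def IsItv (s : Set ℤ) : Prop := ∃ a b : ℤ, a < b ∧ s = Set.Ico a b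

/-- `F|s`: the members of `F` contained in `s`. -/
noncomputable def Res (F : Finset (Set ℤ)) (s : Set ℤ) : Finset (Set ℤ) :=
  F.filter (fun f => f ⊆ s)

/-- `N_x F`: the number of members of `F` containing `x`. -/
noncomputable def Nx (F : Finset (Set ℤ)) (x : ℤ) : ℕ :=
  (F.filter (fun f => x ∈ f)).card

/-- `s` is a good interval for `F` if some point of `s` lies in at most one member
of `F|s`. -/
def Good (F : Finset (Set ℤ)) (s : Set ℤ) : Prop :=
  IsItv s ∧ ∃ x ∈ s, Nx (Res F s) x ≤ 1

/-- `s` is a bad interval for `F` if every point of `s` lies in at least two members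
of `F|s`. -/
def Bad (F : Finset (Set ℤ)) (s : Set ℤ) : Prop :=
  IsItv s ∧ ∀ x ∈ s, 2 ≤ Nx (Res F s) x

/-- `s` is a minimal bad interval: `s` is bad and every proper subinterval is good. -/
def MinBad (F : Finset (Set ℤ)) (s : Set ℤ) : Prop :=
  Bad F s ∧ ∀ t, IsItv t → t ⊆ s → t ≠ s → Good F t

/-- `a b : ℕ → ℤ` enumerate (for indices `< k`) the maximal intervals
`[a₁,b₁),…,[a_k,b_k)` of `F|s`, with strictly increasing left and right endpoints,
and every member of `F|s` is contained in one of them. -/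
def MaxEnum (F : Finset (Set ℤ)) (s : Set ℤ) (k : ℕ) (a b : ℕ → ℤ) : Prop :=
  0 < k ∧
  (∀ i < k, a i < b i) ∧
  (∀ i j, i < j → j < k → a i < a j ∧ b i < b j) ∧
  (∀ i < k, Set.Ico (a i) (b i) ∈ Res F s) ∧
  (∀ f ∈ Res F s, ∃ i < k, f ⊆ Set.Ico (a i) (b i))

/-- The Franzblau–Kleitman reduction `F↓s`: remove the maximal intervals
`[a₁,b₁),…,[a_k,b_k)` of `F|s` and insert `[a₂,b₁),…,[a_k,b_{k-1})`. -/
noncomputable def Reduce (F : Finset (Set ℤ)) (k : ℕ) (a b : ℕ → ℤ) : Finset (Set ℤ) :=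
  (F \ (Finset.range k).image (fun i => Set.Ico (a i) (b i))) ∪
    (Finset.range (k - 1)).image (fun i => Set.Ico (a (i + 1)) (b i))

/-- If `s` is a minimal bad interval for `F` and `t` is good for `F`, then `t` is
good for the reduced family `F↓s`. -/
theorem good_of_reduce (F : Finset (Set ℤ)) (s t : Set ℤ)
    (k : ℕ) (a b : ℕ → ℤ) (hmin : MinBad F s) (henum : MaxEnum F s k a b)
    (ht : Good F t) : Good (Reduce F k a b) t := by
  obtain ⟨⟨hsitv, hsbad⟩, hsmin⟩ := hmin
  obtain ⟨hk, hab, hmono, hmem, hcov⟩ := henum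
  obtain ⟨htitv, x₀, hx₀t, hx₀n⟩ := ht
  obtain ⟨A, B, hAB, rfl⟩ := hsitv
  obtain ⟨c, d, hcd, rfl⟩ := htitv
  set T : Set ℤ := Set.Ico c d with hT
  -- basic monotonicity
  have hmono_le : ∀ i j, i ≤ j → j < k → a i ≤ a j ∧ b i ≤ b j := by
    intro i j hij hjk
    rcases eq_or_lt_of_le hij with h | h
    · subst h; exact ⟨le_refl _, le_refl _⟩
    · exact ⟨(hmono i j h hjk).1.le, (hmono i j h hjk).2.le⟩
  -- each I_i is in F and within [A,B)
  have hIF : ∀ i < k, Set.Ico (a i) (b i) ∈ F := by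
    intro i hi
    have := hmem i hi
    rw [Res, Finset.mem_filter] at this
    exact this.1
  have hIs : ∀ i < k, A ≤ a i ∧ b i ≤ B := by
    intro i hi
    have h := hmem i hi
    rw [Res, Finset.mem_filter] at h
    have h1 := h.2 (show a i ∈ Set.Ico (a i) (b i) by
      simp [Set.mem_Ico]; exact hab i hi)
    have h2 := h.2 (show b i - 1 ∈ Set.Ico (a i) (b i) by
      simp [Set.mem_Ico]; have := hab i hi; omega)
    simp [Set.mem_Ico] at h1 h2
    omega
  -- injectivity of i ↦ I i
  have hInj : ∀ i j, i < k → j < k → Set.Ico (a i) (b i) = Set.Ico (a j) (b j) → i = j := by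
    intro i j hi hj hEq
    by_contra hne
    rcases Nat.lt_or_ge i j with h | h
    · have hlt := (hmono i j h hj).1
      have : a i ∈ Set.Ico (a j) (b j) := by
        rw [← hEq]; simp [Set.mem_Ico]; exact hab i hi
      simp [Set.mem_Ico] at this; omega
    · have h' : j < i := by omega
      have hlt := (hmono j i h' hi).1
      have : a j ∈ Set.Ico (a i) (b i) := by
        rw [hEq]; simp [Set.mem_Ico]; exact hab j hj
      simp [Set.mem_Ico] at this; omega
  refine ⟨⟨c, d, hcd, rfl⟩, ?_⟩
  by_contra hcon
  push_neg at hcon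
  have hbadG : ∀ y ∈ T, 2 ≤ Nx (Res (Reduce F k a b) T) y := by
    intro y hy; have := hcon y hy; omega
  -- index families
  set PI : ℤ → Finset ℕ := fun y =>
    (Finset.range k).filter (fun i => Set.Ico (a i) (b i) ⊆ T ∧ y ∈ Set.Ico (a i) (b i))
    with hPI
  set QI : ℤ → Finset ℕ := fun y =>
    (Finset.range (k-1)).filter
      (fun i => Set.Ico (a (i+1)) (b i) ⊆ T ∧ y ∈ Set.Ico (a (i+1)) (b i)) with hQI
  -- key counting inequality
  have key : ∀ y : ℤ,
      Nx (Res (Reduce F k a b) T) y + (PI y).card ≤ Nx (Res F T) y + (QI y).card := by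
    intro y
    classical
    set Rem := (Finset.range k).image (fun i => Set.Ico (a i) (b i)) with hRem
    set New := (Finset.range (k-1)).image (fun i => Set.Ico (a (i+1)) (b i)) with hNew
    set A1 := (Res F T).filter (fun f => y ∈ f) with hA1
    set A2 := A1 ∩ Rem with hA2
    set Qs := New.filter (fun g => g ⊆ T ∧ y ∈ g) with hQs
    have hsub1 : (Res (Reduce F k a b) T).filter (fun f => y ∈ f) ⊆ (A1 \ A2) ∪ Qs := by
      intro g hg
      rw [Finset.mem_filter] at hg
      obtain ⟨hg1, hgy⟩ := hg
      rw [Res, Finset.mem_filter] at hg1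
      obtain ⟨hg2, hgT⟩ := hg1
      rw [Reduce, Finset.mem_union] at hg2
      rcases hg2 with h | h
      · rw [Finset.mem_sdiff] at h
        refine Finset.mem_union_left _ ?_
        rw [Finset.mem_sdiff]
        constructor
        · rw [hA1, Finset.mem_filter, Res, Finset.mem_filter]
          exact ⟨⟨h.1, hgT⟩, hgy⟩
        · rw [hA2, Finset.mem_inter]
          intro hcontra
          exact h.2 hcontra.2
      · refine Finset.mem_union_right _ ?_
        rw [hQs, Finset.mem_filter]
        exact ⟨h, hgT, hgy⟩
    have hcard1 : Nx (Res (Reduce F k a b) T) y ≤ (A1 \ A2).card + Qs.card := by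
      calc Nx (Res (Reduce F k a b) T) y ≤ ((A1 \ A2) ∪ Qs).card :=
            Finset.card_le_card hsub1
        _ ≤ (A1 \ A2).card + Qs.card := Finset.card_union_le _ _
    have hA2sub : A2 ⊆ A1 := Finset.inter_subset_left
    have hcard2 : (A1 \ A2).card + A2.card = A1.card :=
      Finset.card_sdiff_add_card_eq_card hA2sub
    have hPIA2 : (PI y).card ≤ A2.card := by
      apply Finset.card_le_card_of_injOn (fun i => Set.Ico (a i) (b i))
      · intro i hi; rw [Finset.mem_coe] at hi ⊢
        rw [hPI] at hi
        simp only [Finset.mem_filter, Finset.mem_range] at hi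
        obtain ⟨hik, hiT, hiy⟩ := hi
        rw [hA2, Finset.mem_inter]
        constructor
        · rw [hA1, Finset.mem_filter, Res, Finset.mem_filter]
          exact ⟨⟨hIF i hik, hiT⟩, hiy⟩
        · rw [hRem, Finset.mem_image]
          exact ⟨i, Finset.mem_range.2 hik, rfl⟩
      · intro i hi j hj hEq
        rw [hPI] at hi hj
        simp only [Finset.coe_filter, Set.mem_setOf_eq, Finset.mem_range] at hi hj
        exact hInj i j hi.1 hj.1 hEq
    have hQsQI : Qs.card ≤ (QI y).card := by
      have hsub2 : Qs ⊆ (QI y).image (fun i => Set.Ico (a (i+1)) (b i)) := by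
        intro g hg
        rw [hQs, Finset.mem_filter] at hg
        obtain ⟨hgNew, hgT, hgy⟩ := hg
        rw [hNew, Finset.mem_image] at hgNew
        obtain ⟨i, hik, rfl⟩ := hgNew
        rw [Finset.mem_image]
        refine ⟨i, ?_, rfl⟩
        rw [hQI, Finset.mem_filter]
        exact ⟨hik, hgT, hgy⟩
      calc Qs.card ≤ ((QI y).image (fun i => Set.Ico (a (i+1)) (b i))).card :=
            Finset.card_le_card hsub2
        _ ≤ (QI y).card := Finset.card_image_le
    have hA1card : A1.card = Nx (Res F T) y := rfl
    omega
  -- fact: membership in QI gives basic inequalities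
  have hQImem : ∀ y i, i ∈ QI y → i < k - 1 ∧ Set.Ico (a (i+1)) (b i) ⊆ T ∧
      a (i+1) ≤ y ∧ y < b i := by
    intro y i hi
    rw [hQI] at hi
    simp only [Finset.mem_filter, Finset.mem_range, Set.mem_Ico] at hi
    exact ⟨hi.1, hi.2.1, hi.2.2⟩
  have hJbounds : ∀ y i, i ∈ QI y → c ≤ a (i+1) ∧ b i ≤ d := by
    intro y i hi
    obtain ⟨hik, hiT, hy1, hy2⟩ := hQImem y i hi
    have h1 : a (i+1) ∈ T := hiT (by simp [Set.mem_Ico]; omega)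
    have h2 : b i - 1 ∈ T := hiT (by simp [Set.mem_Ico]; omega)
    rw [hT, Set.mem_Ico] at h1 h2
    omega
  -- case: unmatchable-down index exists?
  by_cases hdown : ∀ i, i < k - 1 → Set.Ico (a (i+1)) (b i) ⊆ T →
      (Set.Ico (a (i+1)) (b i)).Nonempty → Set.Ico (a i) (b i) ⊆ T
  case pos =>
    -- down-matching works everywhere; x₀ is still good
    have hQP : (QI x₀).card ≤ (PI x₀).card := by
      apply Finset.card_le_card_of_injOn id
      · intro i hi; rw [Finset.mem_coe] at hi ⊢
        obtain ⟨hik, hiT, hy1, hy2⟩ := hQImem x₀ i hi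
        have hik' : i < k := by omega
        have hIT : Set.Ico (a i) (b i) ⊆ T :=
          hdown i hik hiT ⟨x₀, by simp [Set.mem_Ico]; omega⟩
        have hax : a i ≤ a (i+1) := (hmono_le i (i+1) (by omega) (by omega)).1
        rw [hPI]
        simp only [id, Finset.mem_filter, Finset.mem_range, Set.mem_Ico]
        exact ⟨hik', hIT, by omega, hy2⟩
      · intro i _ j _ h; exact h
    have h1 := key x₀
    have h2 := hbadG x₀ hx₀t
    omega
  case neg =>
  by_cases hup : ∀ i, i < k - 1 → Set.Ico (a (i+1)) (b i) ⊆ T →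
      (Set.Ico (a (i+1)) (b i)).Nonempty → Set.Ico (a (i+1)) (b (i+1)) ⊆ T
  case pos =>
    have hQP : (QI x₀).card ≤ (PI x₀).card := by
      apply Finset.card_le_card_of_injOn (· + 1)
      · intro i hi; rw [Finset.mem_coe] at hi ⊢
        obtain ⟨hik, hiT, hy1, hy2⟩ := hQImem x₀ i hi
        have hik' : i + 1 < k := by omega
        have hIT : Set.Ico (a (i+1)) (b (i+1)) ⊆ T :=
          hup i hik hiT ⟨x₀, by simp [Set.mem_Ico]; omega⟩
        have hbx : b i ≤ b (i+1) := (hmono_le i (i+1) (by omega) hik').2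
        rw [hPI]
        simp only [Finset.mem_filter, Finset.mem_range, Set.mem_Ico]
        exact ⟨hik', hIT, by omega, by omega⟩
      · intro i _ j _ h; simpa using h
    have h1 := key x₀
    have h2 := hbadG x₀ hx₀t
    omega
  case neg =>
  push_neg at hdown hup
  obtain ⟨md, hmd1, hmdJT, hmdNE, hmdI⟩ := hdown
  obtain ⟨mu, hmu1, hmuJT, hmuNE, hmuI⟩ := hup
  have hmdk : md < k := by omega
  have hmuk : mu < k := by omega
  have hmuk1 : mu + 1 < k := by omega
  have hmdk1 : md + 1 < k := by omega
  -- endpoints facts for md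
  have hmdne : a (md+1) < b md := by
    obtain ⟨z, hz⟩ := hmdNE
    rw [Set.mem_Ico] at hz; omega
  have hcmd : c ≤ a (md+1) ∧ b md ≤ d := by
    have h1 : a (md+1) ∈ T := hmdJT (by simp [Set.mem_Ico]; omega)
    have h2 : b md - 1 ∈ T := hmdJT (by simp [Set.mem_Ico]; omega)
    rw [hT, Set.mem_Ico] at h1 h2
    omega
  have hamd : a md < c := by
    by_contra h
    push_neg at h
    apply hmdI
    intro z hz
    rw [Set.mem_Ico] at hz ⊢
    omega
  -- endpoints facts for mu
  have hmune : a (mu+1) < b mu := by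
    obtain ⟨z, hz⟩ := hmuNE
    rw [Set.mem_Ico] at hz; omega
  have hcmu : c ≤ a (mu+1) ∧ b mu ≤ d := by
    have h1 : a (mu+1) ∈ T := hmuJT (by simp [Set.mem_Ico]; omega)
    have h2 : b mu - 1 ∈ T := hmuJT (by simp [Set.mem_Ico]; omega)
    rw [hT, Set.mem_Ico] at h1 h2
    omega
  have hdmu : d < b (mu+1) := by
    by_contra h
    push_neg at h
    apply hmuI
    intro z hz
    rw [Set.mem_Ico] at hz ⊢
    omega
  -- md ≤ mu
  have hmdmu : md ≤ mu := by
    by_contra h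
    push_neg at h
    have : b (mu+1) ≤ b md := (hmono_le (mu+1) md (by omega) hmdk).2
    omega
  -- uniqueness of md
  have humd : ∀ y i, i ∈ QI y → a i < c → i = md := by
    intro y i hi hai
    have hc := hJbounds y i hi
    obtain ⟨hik, _, _, _⟩ := hQImem y i hi
    by_contra hne
    rcases Nat.lt_or_ge i md with h | h
    · have : a (i+1) ≤ a md := (hmono_le (i+1) md (by omega) hmdk).1
      omega
    · have h' : md < i := by omega
      have : a (md+1) ≤ a i := (hmono_le (md+1) i (by omega) (by omega)).1
      omega
  -- uniqueness of mu
  have humu : ∀ y i, i ∈ QI y → d < b (i+1) → i = mu := by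
    intro y i hi hbi
    have hc := hJbounds y i hi
    obtain ⟨hik, _, _, _⟩ := hQImem y i hi
    by_contra hne
    rcases Nat.lt_or_ge i mu with h | h
    · have : b (i+1) ≤ b mu := (hmono_le (i+1) mu (by omega) hmuk).2
      omega
    · have h' : mu < i := by omega
      have : b (mu+1) ≤ b i := (hmono_le (mu+1) i (by omega) (by omega)).2
      omega
  -- refined counting: away from hot zone
  have hC2 : ∀ y : ℤ, (y < b md → y < a (mu+1)) → (QI y).card ≤ (PI y).card := by
    intro y hy
    by_cases hymd : a (md+1) ≤ y ∧ y < b md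
    · -- y in J md: use up-shift; y < a (mu+1) so i = mu impossible
      have hymu : y < a (mu+1) := hy hymd.2
      apply Finset.card_le_card_of_injOn (· + 1)
      · intro i hi; rw [Finset.mem_coe] at hi ⊢
        obtain ⟨hik, hiT, hy1, hy2⟩ := hQImem y i hi
        have hc := hJbounds y i hi
        have hik' : i + 1 < k := by omega
        have hbid : b (i+1) ≤ d := by
          by_contra hcon2
          push_neg at hcon2
          have := humu y i hi hcon2
          subst this
          omega
        have hbx : b i ≤ b (i+1) := (hmono_le i (i+1) (by omega) hik').2
        rw [hPI]
        simp only [Finset.mem_filter, Finset.mem_range, Set.mem_Ico]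
        refine ⟨hik', ?_, by omega, by omega⟩
        intro z hz
        rw [Set.mem_Ico] at hz ⊢
        omega
      · intro i _ j _ h; simpa using h
    · -- y not in J md: use identity
      apply Finset.card_le_card_of_injOn id
      · intro i hi; rw [Finset.mem_coe] at hi ⊢
        obtain ⟨hik, hiT, hy1, hy2⟩ := hQImem y i hi
        have hc := hJbounds y i hi
        have hik' : i < k := by omega
        have haic : c ≤ a i := by
          by_contra hcon2
          push_neg at hcon2
          have := humd y i hi hcon2
          subst this
          exact hymd ⟨hy1, hy2⟩
        have hax : a i ≤ a (i+1) := (hmono_le i (i+1) (by omega) (by omega)).1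
        rw [hPI]
        simp only [id, Finset.mem_filter, Finset.mem_range, Set.mem_Ico]
        refine ⟨hik', ?_, by omega, hy2⟩
        intro z hz
        rw [Set.mem_Ico] at hz ⊢
        omega
      · intro i _ j _ h; exact h
  -- general counting: at most one extra
  have hC1 : ∀ y : ℤ, (QI y).card ≤ (PI y).card + 1 := by
    intro y
    have herase : ((QI y).erase md).card ≤ (PI y).card := by
      apply Finset.card_le_card_of_injOn id
      · intro i hi; rw [Finset.mem_coe] at hi ⊢
        rw [Finset.mem_erase] at hi
        obtain ⟨hne, hi⟩ := hi
        obtain ⟨hik, hiT, hy1, hy2⟩ := hQImem y i hi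
        have hc := hJbounds y i hi
        have hik' : i < k := by omega
        have haic : c ≤ a i := by
          by_contra hcon2
          push_neg at hcon2
          exact hne (humd y i hi hcon2)
        have hax : a i ≤ a (i+1) := (hmono_le i (i+1) (by omega) (by omega)).1
        rw [hPI]
        simp only [id, Finset.mem_filter, Finset.mem_range, Set.mem_Ico]
        refine ⟨hik', ?_, by omega, hy2⟩
        intro z hz
        rw [Set.mem_Ico] at hz ⊢
        omega
      · intro i _ j _ h; exact h
    by_cases hm : md ∈ QI y
    · have := Finset.card_erase_add_one hm
      omega
    · rw [Finset.erase_eq_of_notMem hm] at herase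
      omega
  -- the interval [A, d) is bad: contradiction with minimality
  have hAd : A < d := by
    have := (hIs md hmdk).1
    omega
  have hdB : d < B := by
    have := (hIs (mu+1) hmuk1).2
    omega
  have hAc : A < c := by
    have := (hIs md hmdk).1
    omega
  have hgoodv := hsmin (Set.Ico A d) ⟨A, d, hAd, rfl⟩
    (Set.Ico_subset_Ico (le_refl A) hdB.le)
    (by
      intro hEq
      have h1 : d ∈ Set.Ico A B := by rw [Set.mem_Ico]; omega
      rw [← hEq, Set.mem_Ico] at h1
      omega)
  obtain ⟨_, xv, hxv, hxvn⟩ := hgoodv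
  rw [Set.mem_Ico] at hxv
  -- show 2 ≤ Nx (Res F (Ico A d)) xv, contradiction
  have hfinal : 2 ≤ Nx (Res F (Set.Ico A d)) xv := by
    rcases lt_or_ge xv c with hxc | hxc
    · -- xv < c : use badness of s
      have hxs : xv ∈ Set.Ico A B := by
        rw [Set.mem_Ico]
        have h1 := (hIs (md+1) hmdk1).2
        omega
      have h2 := hsbad xv hxs
      have hsubf : (Res F (Set.Ico A B)).filter (fun f => xv ∈ f) ⊆
          (Res F (Set.Ico A d)).filter (fun f => xv ∈ f) := by
        intro g hg
        rw [Finset.mem_filter, Res, Finset.mem_filter] at hg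
        obtain ⟨⟨hgF, hgs⟩, hgx⟩ := hg
        obtain ⟨j, hjk, hgj⟩ := hcov g (by rw [Res, Finset.mem_filter]; exact ⟨hgF, hgs⟩)
        have hxj : xv ∈ Set.Ico (a j) (b j) := hgj hgx
        rw [Set.mem_Ico] at hxj
        have hjmd : j ≤ md := by
          by_contra hcon2
          push_neg at hcon2
          have : a (md+1) ≤ a j := (hmono_le (md+1) j (by omega) hjk).1
          omega
        have hbj : b j ≤ b md := (hmono_le j md hjmd hmdk).2
        have haj : A ≤ a j := (hIs j hjk).1
        rw [Finset.mem_filter, Res, Finset.mem_filter]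
        refine ⟨⟨hgF, ?_⟩, hgx⟩
        intro z hz
        have := hgj hz
        rw [Set.mem_Ico] at this ⊢
        omega
      calc 2 ≤ Nx (Res F (Set.Ico A B)) xv := h2
        _ ≤ _ := Finset.card_le_card hsubf
    · -- c ≤ xv: xv ∈ T
      have hxvT : xv ∈ T := by rw [hT, Set.mem_Ico]; exact ⟨hxc, hxv.2⟩
      have hTsubv : ∀ g : Set ℤ, g ⊆ T → g ⊆ Set.Ico A d := by
        intro g hg z hz
        have := hg hz
        rw [hT, Set.mem_Ico] at this
        rw [Set.mem_Ico]
        omega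
      have hmonoTv : (Res F T).filter (fun f => xv ∈ f) ⊆
          (Res F (Set.Ico A d)).filter (fun f => xv ∈ f) := by
        intro g hg
        rw [Finset.mem_filter, Res, Finset.mem_filter] at hg ⊢
        exact ⟨⟨hg.1.1, hTsubv g hg.1.2⟩, hg.2⟩
      by_cases hhot : a (mu+1) ≤ xv ∧ xv < b md
      · -- hot zone
        have hxmd : xv ∈ Set.Ico (a md) (b md) := by
          rw [Set.mem_Ico]; omega
        have hImdv : Set.Ico (a md) (b md) ⊆ Set.Ico A d := by
          intro z hz
          rw [Set.mem_Ico] at hz ⊢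
          have := (hIs md hmdk).1
          omega
        rcases Nat.lt_or_ge md mu with hlt | hge
        · -- two maximal intervals I md, I (md+1) both contain xv and lie in [A,d)
          have hbmd1 : b (md+1) ≤ b mu := (hmono_le (md+1) mu (by omega) hmuk).2
          have hamd1 : a (md+1) ≤ a (mu+1) := (hmono_le (md+1) (mu+1) (by omega) hmuk1).1
          have hbmdlt : b md < b (md+1) := (hmono (md) (md+1) (by omega) hmdk1).2
          have hpair : ({Set.Ico (a md) (b md), Set.Ico (a (md+1)) (b (md+1))} : Finset (Set ℤ))
              ⊆ (Res F (Set.Ico A d)).filter (fun f => xv ∈ f) := by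
            intro g hg
            rw [Finset.mem_insert, Finset.mem_singleton] at hg
            rw [Finset.mem_filter, Res, Finset.mem_filter]
            rcases hg with rfl | rfl
            · exact ⟨⟨hIF md hmdk, hImdv⟩, hxmd⟩
            · refine ⟨⟨hIF (md+1) hmdk1, ?_⟩, ?_⟩
              · intro z hz
                rw [Set.mem_Ico] at hz ⊢
                have := (hIs (md+1) hmdk1).1
                omega
              · rw [Set.mem_Ico]; omega
          have hpcard : ({Set.Ico (a md) (b md), Set.Ico (a (md+1)) (b (md+1))} :
              Finset (Set ℤ)).card = 2 := by
            rw [Finset.card_insert_of_notMem, Finset.card_singleton]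
            rw [Finset.mem_singleton]
            intro hEq
            have := hInj md (md+1) hmdk hmdk1 hEq
            omega
          calc 2 = _ := hpcard.symm
            _ ≤ _ := Finset.card_le_card hpair
        · -- md = mu : single removed; use hC1 and the singleton I md plus a member of F|t
          have hmdeq : md = mu := by omega
          have h1 := key xv
          have h2 := hbadG xv hxvT
          have h3 := hC1 xv
          have h4 : 1 ≤ Nx (Res F T) xv := by omega
          have h5 : 0 < ((Res F T).filter (fun f => xv ∈ f)).card := h4
          obtain ⟨f, hf⟩ := Finset.card_pos.1 h5
          rw [Finset.mem_filter, Res, Finset.mem_filter] at hf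
          obtain ⟨⟨hfF, hfT⟩, hfx⟩ := hf
          have hfne : f ≠ Set.Ico (a md) (b md) := by
            intro hEq
            apply hmdI
            rw [← hEq]
            exact hfT
          have hpair : ({Set.Ico (a md) (b md), f} : Finset (Set ℤ))
              ⊆ (Res F (Set.Ico A d)).filter (fun g => xv ∈ g) := by
            intro g hg
            rw [Finset.mem_insert, Finset.mem_singleton] at hg
            rw [Finset.mem_filter, Res, Finset.mem_filter]
            rcases hg with rfl | rfl
            · exact ⟨⟨hIF md hmdk, hImdv⟩, hxmd⟩
            · exact ⟨⟨hfF, hTsubv _ hfT⟩, hfx⟩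
          have hpcard : ({Set.Ico (a md) (b md), f} : Finset (Set ℤ)).card = 2 := by
            rw [Finset.card_insert_of_notMem, Finset.card_singleton]
            rw [Finset.mem_singleton]
            exact fun h => hfne h.symm
          calc 2 = _ := hpcard.symm
            _ ≤ _ := Finset.card_le_card hpair
      · -- not hot: counting gives 2 ≤ Nx (Res F T) xv
        have hc2 : (QI xv).card ≤ (PI xv).card := by
          apply hC2
          intro h1
          by_contra h2
          push_neg at h2
          exact hhot ⟨h2, h1⟩
        have h1 := key xv
        have h2 := hbadG xv hxvT
        have h3 : 2 ≤ Nx (Res F T) xv := by omega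
        calc 2 ≤ Nx (Res F T) xv := h3
          _ ≤ _ := Finset.card_le_card hmonoTv
  omega
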